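/- arXiv:2002.03542 — 2 statements merged into one kernel-verified Lean document; each statement's English description precedes it below -/
import Mathlib

section
/- Let F be an intersection-closed family of subsets of X, let U_1,...,U_n ∈ F and X ∈ F realize a code C ⊆ 2^{[n]}, and let σ ⊆ [n]. Setting V_i = U_i ∩ (∩_{j∈σ} U_j) and Y = X ∩ (∩_{j∈σ} U_j), the sets V_1,...,V_n realize the trunk Tk_C(σ) relative to Y, i.e., code({V_1,...,V_n}, Y) = Tk_C(σ). -/
/-- The code of the cover `U` relative to the ambient set `Xs`. -/
def codeOf {α : Type*} {n : ℕ} (U : Fin n → Set α) (Xs : Set α) :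
    Set (Finset (Fin n)) :=
  {τ | ((Xs ∩ ⋂ i ∈ τ, U i) \ ⋃ j, ⋃ (_ : j ∉ τ), U j).Nonempty}

/-- The trunk of `σ` in a code `C`. -/
def Tk {V : Type*} (C : Set (Finset V)) (σ : Finset V) : Set (Finset V) :=
  {τ ∈ C | σ ⊆ τ}

/-- Restricting an `F`-realization of `C` to `⋂_{j∈σ} U_j` realizes the trunk `Tk_C(σ)`:
with `V_i = U_i ∩ ⋂_{j∈σ} U_j` and `Y = X ∩ ⋂_{j∈σ} U_j`, one has
`code(V, Y) = Tk_C(σ)`, and the sets involved stay in `F`. -/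
theorem stmt6 {α : Type*} {n : ℕ} (F : Set (Set α))
    (hempty : ∅ ∈ F) (hinter : ∀ A ∈ F, ∀ B ∈ F, A ∩ B ∈ F)
    (Xs : Set α) (hXs : Xs ∈ F)
    (U : Fin n → Set α) (hU : ∀ i, U i ∈ F)
    (σ : Finset (Fin n)) :
    (∀ i, U i ∩ ⋂ j ∈ σ, U j ∈ F) ∧
    (Xs ∩ ⋂ j ∈ σ, U j) ∈ F ∧
    codeOf (fun i => U i ∩ ⋂ j ∈ σ, U j) (Xs ∩ ⋂ j ∈ σ, U j) =
      Tk (codeOf U Xs) σ := by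
  have key : ∀ A ∈ F, ∀ (s : Finset (Fin n)), A ∩ ⋂ j ∈ s, U j ∈ F := by
    intro A hA s
    induction s using Finset.induction_on with
    | empty => simpa using hA
    | @insert a s' ha ih =>
        have : A ∩ ⋂ j ∈ insert a s', U j = (A ∩ ⋂ j ∈ s', U j) ∩ U a := by
          ext x
          simp only [Finset.mem_insert, Set.mem_inter_iff, Set.mem_iInter]
          constructor
          · rintro ⟨hA, h⟩; exact ⟨⟨hA, fun j hj => h j (Or.inr hj)⟩, h a (Or.inl rfl)⟩
          · rintro ⟨⟨hA, h⟩, ha⟩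
            exact ⟨hA, fun j hj => hj.elim (fun e => e ▸ ha) (h j)⟩
        rw [this]; exact hinter _ ih _ (hU a)
  refine ⟨fun i => key _ (hU i) σ, key _ hXs σ, ?_⟩
  ext τ
  simp only [codeOf, Tk, Set.mem_setOf_eq]
  constructor
  · rintro ⟨x, hx⟩
    simp only [Set.mem_diff, Set.mem_inter_iff, Set.mem_iInter, Set.mem_iUnion, not_exists] at hx
    obtain ⟨⟨⟨hXsx, hW⟩, hτ⟩, hout⟩ := hx
    have hσ : σ ⊆ τ := by
      intro j hj
      by_contra hjτ
      exact hout j hjτ ⟨hW j hj, hW⟩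
    refine ⟨⟨x, ?_⟩, hσ⟩
    simp only [Set.mem_diff, Set.mem_inter_iff, Set.mem_iInter, Set.mem_iUnion, not_exists]
    exact ⟨⟨hXsx, fun i hi => (hτ i hi).1⟩, fun j hj hxj => hout j hj ⟨hxj, hW⟩⟩
  · rintro ⟨⟨x, hx⟩, hσ⟩
    simp only [Set.mem_diff, Set.mem_inter_iff, Set.mem_iInter, Set.mem_iUnion, not_exists] at hx
    obtain ⟨⟨hXsx, hτ⟩, hout⟩ := hx
    have hW : ∀ j ∈ σ, x ∈ U j := fun j hj => hτ j (hσ hj)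
    refine ⟨x, ?_⟩
    simp only [Set.mem_diff, Set.mem_inter_iff, Set.mem_iInter, Set.mem_iUnion, not_exists]
    exact ⟨⟨⟨hXsx, hW⟩, fun i hi => ⟨hτ i hi, hW⟩⟩, fun j hj h => hout j hj h.1⟩
end

section
/- Codes with good-cover realizations by sets drawn from an intersection-closed family form a down-set under the image-of-morphism order: if C = code(U, X) with U ⊆ F for an intersection-closed family F of subsets of X, and D is either the image of C under a code morphism or a trunk of C, then D = code(V, Y) for some V ⊆ F and Y ∈ F ∪ {X}. -/
lemma mem_codeOf {α : Type*} {n : ℕ} (U : Fin n → Set α) (Xs : Set α) (τ : Finset (Fin n)) :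
    τ ∈ codeOf U Xs ↔ ∃ x ∈ Xs, ∀ i, x ∈ U i ↔ i ∈ τ := by
  constructor
  · rintro ⟨x, ⟨⟨hx, hpos⟩, hneg⟩⟩
    simp only [Set.mem_iInter] at hpos
    refine ⟨x, hx, fun i => ⟨fun hxi => ?_, fun hi => hpos i hi⟩⟩
    by_contra hi
    exact hneg (Set.mem_iUnion.2 ⟨i, Set.mem_iUnion.2 ⟨hi, hxi⟩⟩)
  · rintro ⟨x, hx, h⟩
    refine ⟨x, ⟨⟨hx, ?_⟩, ?_⟩⟩
    · exact Set.mem_iInter.2 fun i => Set.mem_iInter.2 fun hi => (h i).2 hi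
    · intro hc
      simp only [Set.mem_iUnion] at hc
      obtain ⟨j, hj, hxj⟩ := hc
      exact hj ((h j).1 hxj)

lemma inter_mem_aux {α : Type*} (F : Set (Set α))
    (hinter : ∀ A ∈ F, ∀ B ∈ F, A ∩ B ∈ F)
    (Xs : Set α) (hXs : Xs ∈ F) {n : ℕ} (U : Fin n → Set α) (hU : ∀ i, U i ∈ F)
    (s : Finset (Fin n)) : (Xs ∩ ⋂ i ∈ s, U i) ∈ F := by
  induction s using Finset.induction_on with
  | empty => simpa using hXs
  | insert a s ha ih =>
    have h : (Xs ∩ ⋂ i ∈ insert a s, U i) = (Xs ∩ ⋂ i ∈ s, U i) ∩ U a := by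
      ext x
      simp only [Set.mem_inter_iff, Set.mem_iInter, Finset.mem_insert]
      constructor
      · rintro ⟨hx, h⟩; exact ⟨⟨hx, fun i hi => h i (Or.inr hi)⟩, h a (Or.inl rfl)⟩
      · rintro ⟨⟨hx, h⟩, ha⟩
        exact ⟨hx, fun i hi => hi.elim (fun e => e ▸ ha) (h i)⟩
    rw [h]
    exact hinter _ ih _ (hU a)

/-- Codes realizable by sets from an intersection-closed family form a down-set:
if `C = code(U, X)` with all `U_i ∈ F` and `X ∈ F`, then every image of `C` under a
code morphism (defined by trunks) and every trunk of `C` is realizable by sets from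
`F` relative to some `Y ∈ F ∪ {X}`. -/
theorem stmt15 {α : Type*} {n : ℕ} (F : Set (Set α))
    (hempty : ∅ ∈ F) (hinter : ∀ A ∈ F, ∀ B ∈ F, A ∩ B ∈ F)
    (Xs : Set α) (hXs : Xs ∈ F)
    (U : Fin n → Set α) (hU : ∀ i, U i ∈ F) :
    (∀ (m : ℕ) (σs : Fin m → Finset (Fin n)),
      ∃ V : Fin m → Set α, (∀ j, V j ∈ F) ∧
        ∃ Y : Set α, (Y ∈ F ∨ Y = Xs) ∧
          codeOf V Y =
            (fun c => Finset.univ.filter (fun j => σs j ⊆ c)) '' codeOf U Xs) ∧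
    (∀ τ : Finset (Fin n),
      ∃ (V : Fin n → Set α) (Y : Set α), (∀ i, V i ∈ F) ∧ (Y ∈ F ∨ Y = Xs) ∧
        codeOf V Y = Tk (codeOf U Xs) τ) := by
  classical
  constructor
  · intro m σs
    refine ⟨fun j => Xs ∩ ⋂ i ∈ σs j, U i,
      fun j => inter_mem_aux F hinter Xs hXs U hU (σs j), Xs, Or.inr rfl, ?_⟩
    ext c
    rw [mem_codeOf]
    constructor
    · rintro ⟨x, hx, h⟩
      refine ⟨Finset.univ.filter (fun i => x ∈ U i), (mem_codeOf U Xs _).2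
        ⟨x, hx, fun i => by simp⟩, ?_⟩
      ext j
      simp only [Finset.mem_filter, Finset.mem_univ, true_and]
      rw [← h j]
      simp only [Set.mem_inter_iff, Set.mem_iInter]
      constructor
      · intro hs; exact ⟨hx, fun i hi => by simpa using hs hi⟩
      · rintro ⟨_, hs⟩ i hi; simp [hs i hi]
    · rintro ⟨c₀, hc₀, rfl⟩
      obtain ⟨x, hx, h⟩ := (mem_codeOf U Xs c₀).1 hc₀
      refine ⟨x, hx, fun j => ?_⟩
      simp only [Finset.mem_filter, Finset.mem_univ, true_and,
        Set.mem_inter_iff, Set.mem_iInter]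
      constructor
      · rintro ⟨_, hs⟩ i hi; exact (h i).1 (hs i hi)
      · intro hs; exact ⟨hx, fun i hi => (h i).2 (hs hi)⟩
  · intro τ
    refine ⟨U, Xs ∩ ⋂ i ∈ τ, U i,
      hU, Or.inl (inter_mem_aux F hinter Xs hXs U hU τ), ?_⟩
    ext c
    rw [mem_codeOf]
    constructor
    · rintro ⟨x, ⟨hx, hτ⟩, h⟩
      simp only [Set.mem_iInter] at hτ
      refine ⟨(mem_codeOf U Xs c).2 ⟨x, hx, h⟩, fun i hi => (h i).1 (hτ i hi)⟩
    · rintro ⟨hc, hsub⟩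
      obtain ⟨x, hx, h⟩ := (mem_codeOf U Xs c).1 hc
      exact ⟨x, ⟨hx, Set.mem_iInter.2 fun i => Set.mem_iInter.2
        fun hi => (h i).2 (hsub hi)⟩, h⟩
end
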